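/- Let T be a finite rooted tree with root o. If g solves Ω_p g(i) = -μ_i |f_i|^{p-2} f_i for i ∈ V \ {o}, g_o = 0, and g_i > g_{i*} for all i ∈ V \ {o}, and f > 0 on V \ {o}, then g_i = Σ_{k ∈ 𝒫(i)} (v_k^{-1} Σ_{j ∈ V_k} μ_j f_j^{p-1})^{p̂-1} for all i ∈ V \ {o}, where 𝒫(i) is the set of non-root vertices on the path from i to the root, V_k the subtree rooted at k, and p̂ the conjugate of p. -/
import Mathlib


open scoped ENNReal Classical BigOperators

structure PTree (V : Type) where
  root : V
  par : V → V
  level : V → ℕ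
  level_root : level root = 0
  par_root : par root = root
  level_par : ∀ i, i ≠ root → level i = level (par i) + 1
  par_iter_root : ∀ i, par^[level i] i = root

def PTree.anc {V : Type} (T : PTree V) (k j : V) : Prop := ∃ m, T.par^[m] j = k

noncomputable def OmegaF {V : Type} [Fintype V] (T : PTree V) (v : V → ℝ) (p : ℝ)
    (f : V → ℝ) (i : V) : ℝ :=
  (∑ j ∈ Finset.univ.filter (fun j => T.par j = i ∧ j ≠ T.root),
      v j * |f j - f i| ^ (p - 2) * (f j - f i))
    + v i * |f (T.par i) - f i| ^ (p - 2) * (f (T.par i) - f i)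

namespace PTree

variable {V : Type} (T : PTree V)

lemma root_iter (m : ℕ) : T.par^[m] T.root = T.root :=
  Function.iterate_fixed T.par_root m

lemma level_iterate (j : V) : ∀ m, m ≤ T.level j → T.level (T.par^[m] j) = T.level j - m := by
  intro m
  induction m with
  | zero => simp
  | succ n ih =>
      intro h
      have h' : n ≤ T.level j := by omega
      have h3 := ih h'
      have hne : T.par^[n] j ≠ T.root := by
        intro hr
        rw [hr, T.level_root] at h3
        omega
      have h2 := T.level_par _ hne
      rw [Function.iterate_succ_apply']
      omega

lemma iterate_eq_root (j : V) (m : ℕ) (h : T.level j ≤ m) : T.par^[m] j = T.root := by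
  have : T.par^[m] j = T.par^[m - T.level j] (T.par^[T.level j] j) := by
    rw [← Function.iterate_add_apply]
    congr 1
    omega
  rw [this, T.par_iter_root, T.root_iter]

lemma anc_ne_root {k j : V} (hk : k ≠ T.root) (h : T.anc k j) : j ≠ T.root := by
  rintro rfl
  obtain ⟨m, hm⟩ := h
  rw [T.root_iter] at hm
  exact hk hm.symm

lemma anc_spec {k j : V} (hk : k ≠ T.root) (h : T.anc k j) :
    T.level k ≤ T.level j ∧ T.par^[T.level j - T.level k] j = k := by
  obtain ⟨m, hm⟩ := h
  have hm' : m < T.level j := by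
    by_contra h'
    push_neg at h'
    rw [T.iterate_eq_root j m h'] at hm
    exact hk hm.symm
  have hl := T.level_iterate j m hm'.le
  rw [hm] at hl
  refine ⟨by omega, ?_⟩
  rw [show T.level j - T.level k = m by omega]
  exact hm

lemma anc_self (k : V) : T.anc k k := ⟨0, rfl⟩

lemma anc_trans {k c j : V} (h1 : T.anc k c) (h2 : T.anc c j) : T.anc k j := by
  obtain ⟨m, hm⟩ := h1; obtain ⟨m', hm'⟩ := h2
  exact ⟨m + m', by rw [Function.iterate_add_apply, hm', hm]⟩

lemma anc_unique {k k' j : V} (hk : k ≠ T.root) (hk' : k' ≠ T.root)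
    (h : T.anc k j) (h' : T.anc k' j) (hl : T.level k = T.level k') : k = k' := by
  obtain ⟨_, e⟩ := T.anc_spec hk h
  obtain ⟨_, e'⟩ := T.anc_spec hk' h'
  rw [← e, ← e', hl]

lemma subtree_eq [Fintype V] {k : V} (hk : k ≠ T.root) :
    Finset.univ.filter (fun j => T.anc k j) =
      insert k ((Finset.univ.filter (fun c => T.par c = k ∧ c ≠ T.root)).biUnion
        (fun c => Finset.univ.filter (fun j => T.anc c j))) := by
  ext j
  simp only [Finset.mem_filter, Finset.mem_univ, true_and, Finset.mem_insert, Finset.mem_biUnion]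
  constructor
  · intro hj
    by_cases hjk : j = k
    · exact Or.inl hjk
    · right
      obtain ⟨hle, he⟩ := T.anc_spec hk hj
      set m := T.level j - T.level k with hm
      have hm1 : 1 ≤ m := by
        rcases Nat.eq_zero_or_pos m with h0 | h1
        · exfalso
          apply hjk
          rw [h0] at he
          simpa using he
        · exact h1
      refine ⟨T.par^[m-1] j, ⟨⟨?_, ?_⟩, ⟨m - 1, rfl⟩⟩⟩
      · have he' := he
        rw [show m = m - 1 + 1 by omega, Function.iterate_succ_apply'] at he'
        exact he'
      · intro hr
        have hli := T.level_iterate j (m-1) (by omega)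
        rw [hr, T.level_root] at hli
        omega
  · rintro (rfl | ⟨c, ⟨⟨hpc, hcr⟩, hcj⟩⟩)
    · exact T.anc_self j
    · exact T.anc_trans ⟨1, by simpa using hpc⟩ hcj

end PTree

/-- On a finite rooted tree, the solution of the Poisson equation which is
strictly increasing along paths is recovered from `f` by integrating the
difference relation along paths:
`g_i = Σ_{k ∈ 𝒫(i)} (v_k⁻¹ Σ_{j ∈ V_k} μ_j f_j^{p-1})^{p̂-1}`. -/
theorem poisson_solution_formula {V : Type} [Fintype V] (T : PTree V)
    (v μ : V → ℝ) (p q : ℝ) (hp : 1 < p) (hpq : 1 / p + 1 / q = 1)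
    (hv : ∀ i, 0 < v i) (hμ : ∀ i, 0 < μ i)
    (f g : V → ℝ)
    (hpoisson : ∀ i, i ≠ T.root →
      OmegaF T v p g i = -(μ i) * (|f i| ^ (p - 2) * f i))
    (hg0 : g T.root = 0)
    (hgmono : ∀ i, i ≠ T.root → g (T.par i) < g i)
    (hf : ∀ i, i ≠ T.root → 0 < f i) :
    ∀ i, i ≠ T.root →
      g i = ∑ k ∈ Finset.univ.filter (fun k => k ≠ T.root ∧ T.anc k i),
        ((v k)⁻¹ * ∑ j ∈ Finset.univ.filter (fun j => T.anc k j),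
            μ j * f j ^ (p - 1)) ^ (q - 1) := by
  classical
  have hp0 : p ≠ 0 := ne_of_gt (by linarith)
  have hq0 : q ≠ 0 := by
    intro h
    rw [h, div_zero, add_zero] at hpq
    have : p = 1 := by
      field_simp at hpq
      linarith
    linarith
  have hpq' : q + p = p * q := by
    field_simp at hpq
    linarith
  have hpqe : (p - 1) * (q - 1) = 1 := by nlinarith [hpq']
  -- |x|^(p-2) * x = x^(p-1) for positive x
  have habs : ∀ x : ℝ, 0 < x → |x| ^ (p-2) * x = x ^ (p-1) := by
    intro x hx
    rw [abs_of_pos hx, show p - 1 = p - 2 + 1 by ring, Real.rpow_add hx, Real.rpow_one]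
  -- subtree sum decomposition
  have hsub : ∀ (w : V → ℝ) (k : V), k ≠ T.root →
      ∑ j ∈ Finset.univ.filter (fun j => T.anc k j), w j
        = w k + ∑ c ∈ Finset.univ.filter (fun c => T.par c = k ∧ c ≠ T.root),
            ∑ j ∈ Finset.univ.filter (fun j => T.anc c j), w j := by
    intro w k hk
    rw [T.subtree_eq hk, Finset.sum_insert, Finset.sum_biUnion]
    · intro c hc c' hc' hne
      simp only [Finset.coe_filter, Set.mem_setOf_eq, Finset.mem_univ, true_and] at hc hc'
      apply Finset.disjoint_left.mpr
      intro j hj hj'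
      simp only [Finset.mem_filter, Finset.mem_univ, true_and] at hj hj'
      exact hne (T.anc_unique hc.2 hc'.2 hj hj'
        (by rw [T.level_par _ hc.2, T.level_par _ hc'.2, hc.1, hc'.1]))
    · simp only [Finset.mem_biUnion, Finset.mem_filter, Finset.mem_univ, true_and, not_exists]
      intro c hcc
      have h1 := (T.anc_spec hcc.1.2 hcc.2).1
      have h2 := T.level_par c hcc.1.2
      rw [hcc.1.1] at h2
      omega
  -- path decomposition
  have hpath : ∀ i : V, i ≠ T.root →
      Finset.univ.filter (fun k => k ≠ T.root ∧ T.anc k i)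
        = insert i (Finset.univ.filter (fun k => k ≠ T.root ∧ T.anc k (T.par i))) := by
    intro i hi
    ext k
    simp only [Finset.mem_filter, Finset.mem_univ, true_and, Finset.mem_insert]
    constructor
    · rintro ⟨hk, m, hm⟩
      rcases Nat.eq_zero_or_pos m with h0 | h1
      · left
        rw [h0] at hm
        simpa using hm.symm
      · right
        refine ⟨hk, m - 1, ?_⟩
        rw [show m = m - 1 + 1 by omega, Function.iterate_succ_apply] at hm
        exact hm
    · rintro (rfl | ⟨hk, m, hm⟩)
      · exact ⟨hi, T.anc_self k⟩
      · exact ⟨hk, m + 1, by rw [Function.iterate_succ_apply]; exact hm⟩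
  have hnotmem : ∀ i : V, i ≠ T.root →
      i ∉ Finset.univ.filter (fun k => k ≠ T.root ∧ T.anc k (T.par i)) := by
    intro i hi hmem
    simp only [Finset.mem_filter, Finset.mem_univ, true_and] at hmem
    obtain ⟨_, hanc⟩ := hmem
    have h1 := (T.anc_spec hi hanc).1
    have h2 := T.level_par i hi
    omega
  -- the Poisson equation gives the recurrence for F
  have hrec : ∀ k, k ≠ T.root →
      v k * (g k - g (T.par k)) ^ (p-1)
        = (∑ c ∈ Finset.univ.filter (fun c => T.par c = k ∧ c ≠ T.root),
            v c * (g c - g (T.par c)) ^ (p-1)) + μ k * f k ^ (p-1) := by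
    intro k hk
    have hp' := hpoisson k hk
    unfold OmegaF at hp'
    have hsum : ∀ c ∈ Finset.univ.filter (fun c => T.par c = k ∧ c ≠ T.root),
        v c * |g c - g k| ^ (p-2) * (g c - g k) = v c * (g c - g (T.par c)) ^ (p-1) := by
      intro c hc
      simp only [Finset.mem_filter, Finset.mem_univ, true_and] at hc
      obtain ⟨hpc, hcr⟩ := hc
      have hx : 0 < g c - g k := by
        rw [← hpc]
        exact sub_pos.mpr (hgmono c hcr)
      rw [hpc, mul_assoc, habs _ hx]
    rw [Finset.sum_congr rfl hsum] at hp'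
    have hxk : 0 < g k - g (T.par k) := sub_pos.mpr (hgmono k hk)
    have hlast : v k * |g (T.par k) - g k| ^ (p-2) * (g (T.par k) - g k)
        = -(v k * (g k - g (T.par k)) ^ (p-1)) := by
      rw [show g (T.par k) - g k = -(g k - g (T.par k)) by ring, abs_neg, abs_of_pos hxk,
        show p - 1 = p - 2 + 1 by ring, Real.rpow_add hxk, Real.rpow_one]
      ring
    rw [hlast, habs _ (hf k hk)] at hp'
    linarith
  -- F = S by strong induction on subtree size
  have hFS : ∀ n : ℕ, ∀ k, k ≠ T.root →
      (Finset.univ.filter (fun j => T.anc k j)).card ≤ n →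
      v k * (g k - g (T.par k)) ^ (p-1)
        = ∑ j ∈ Finset.univ.filter (fun j => T.anc k j), μ j * f j ^ (p - 1) := by
    intro n
    induction n with
    | zero =>
        intro k hk hcard
        exfalso
        have hmem : k ∈ Finset.univ.filter (fun j => T.anc k j) := by
          simp [T.anc_self]
        have := Finset.card_pos.mpr ⟨k, hmem⟩
        omega
    | succ n ih =>
        intro k hk hcard
        rw [hrec k hk, hsub (fun j => μ j * f j ^ (p - 1)) k hk]
        have hch : ∀ c ∈ Finset.univ.filter (fun c => T.par c = k ∧ c ≠ T.root),
            v c * (g c - g (T.par c)) ^ (p-1)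
              = ∑ j ∈ Finset.univ.filter (fun j => T.anc c j), μ j * f j ^ (p - 1) := by
          intro c hc
          simp only [Finset.mem_filter, Finset.mem_univ, true_and] at hc
          apply ih c hc.2
          have hkc : k ∉ Finset.univ.filter (fun j => T.anc c j) := by
            simp only [Finset.mem_filter, Finset.mem_univ, true_and]
            intro hanc
            have h1 := (T.anc_spec hc.2 hanc).1
            have h2 := T.level_par c hc.2
            rw [hc.1] at h2
            omega
          have hsubset : Finset.univ.filter (fun j => T.anc c j)
              ⊆ Finset.univ.filter (fun j => T.anc k j) := by
            intro j hj
            simp only [Finset.mem_filter, Finset.mem_univ, true_and] at hj ⊢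
            exact T.anc_trans ⟨1, by simpa using hc.1⟩ hj
          have hcard' := Finset.card_lt_card
            ((Finset.ssubset_iff_of_subset hsubset).mpr ⟨k, by simp [T.anc_self], hkc⟩)
          omega
        rw [Finset.sum_congr rfl hch]
        ring
  -- telescoping along the path, by induction on level
  have hroot : g T.root = ∑ k ∈ Finset.univ.filter (fun k => k ≠ T.root ∧ T.anc k T.root),
      ((v k)⁻¹ * ∑ j ∈ Finset.univ.filter (fun j => T.anc k j),
        μ j * f j ^ (p - 1)) ^ (q - 1) := by
    have he : Finset.univ.filter (fun k => k ≠ T.root ∧ T.anc k T.root) = ∅ := by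
      ext k
      simp only [Finset.mem_filter, Finset.mem_univ, true_and, Finset.notMem_empty, iff_false,
        not_and]
      intro hk hanc
      exact T.anc_ne_root hk hanc rfl
    rw [he, Finset.sum_empty, hg0]
  have main : ∀ n : ℕ, ∀ i : V, T.level i ≤ n →
      g i = ∑ k ∈ Finset.univ.filter (fun k => k ≠ T.root ∧ T.anc k i),
        ((v k)⁻¹ * ∑ j ∈ Finset.univ.filter (fun j => T.anc k j),
            μ j * f j ^ (p - 1)) ^ (q - 1) := by
    intro n
    induction n with
    | zero =>
        intro i hi
        have hir : i = T.root := by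
          by_contra h
          have := T.level_par i h
          omega
        rw [hir]
        exact hroot
    | succ n ih =>
        intro i hi
        by_cases hir : i = T.root
        · rw [hir]; exact hroot
        · have hlev := T.level_par i hir
          have hpar := ih (T.par i) (by omega)
          rw [hpath i hir, Finset.sum_insert (hnotmem i hir), ← hpar]
          have hx : 0 < g i - g (T.par i) := sub_pos.mpr (hgmono i hir)
          have hFi := hFS (Finset.univ.filter (fun j => T.anc i j)).card i hir le_rfl
          rw [← hFi, inv_mul_cancel_left₀ (ne_of_gt (hv i)), ← Real.rpow_mul hx.le,
            hpqe, Real.rpow_one]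
          ring
  intro i _
  exact main (T.level i) i le_rfl
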